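/- Let R be a commutative ring and L, S, c_1 ∈ R. In R[[t]], the coefficient of t^2 in 2(6Lt + (24L^2 + 7LS − 21S^2)t^2 + (120L^2S − 190LS^2 + 75S^3)t^3) · ((1 + St)(1 + 6Lt − 5St)(1 + 4Lt − 3St))^{-1} · (1 + c_1 t) equals 2(6c_1L − 36L^2 + 49LS − 21S^2). -/

import Mathlib

open PowerSeries

private lemma c_mul_X_pow {R : Type*} [CommRing R] (a : R) (n : ℕ) :
    C (R := R) a * (X : R⟦X⟧) ^ n = monomial (R := R) n a := by
  ext m
  rw [X_pow_eq, coeff_C_mul, coeff_monomial, coeff_monomial]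
  split <;> simp

set_option maxHeartbeats 1000000 in
/-- E₇-model generating function: coefficient of `t^2`. -/
theorem euler_e7_dim2 {R : Type*} [CommRing R] (L S c₁ : R) :
    (PowerSeries.coeff (R := R) 2)
      (2 * (6 * C (R := R) L * X
            + (24 * C (R := R) L ^ 2 + 7 * C (R := R) L * C (R := R) S - 21 * C (R := R) S ^ 2) * X ^ 2
            + (120 * C (R := R) L ^ 2 * C (R := R) S - 190 * C (R := R) L * C (R := R) S ^ 2
                + 75 * C (R := R) S ^ 3) * X ^ 3) *
        Ring.inverse ((1 + C (R := R) S * X) * (1 + 6 * C (R := R) L * X - 5 * C (R := R) S * X) *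
          (1 + 4 * C (R := R) L * X - 3 * C (R := R) S * X)) *
        (1 + C (R := R) c₁ * X))
      = 2 * (6 * c₁ * L - 36 * L ^ 2 + 49 * L * S - 21 * S ^ 2) := by
  set u : R⟦X⟧ := (1 + C (R := R) S * X) * (1 + 6 * C (R := R) L * X - 5 * C (R := R) S * X) *
      (1 + 4 * C (R := R) L * X - 3 * C (R := R) S * X) with hu
  have hunit : IsUnit u := by
    rw [PowerSeries.isUnit_iff_constantCoeff]
    simp [hu]
  set v : R⟦X⟧ := Ring.inverse u with hv
  set P : R⟦X⟧ := 2 * (6 * C (R := R) L * X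
            + (24 * C (R := R) L ^ 2 + 7 * C (R := R) L * C (R := R) S - 21 * C (R := R) S ^ 2) * X ^ 2
            + (120 * C (R := R) L ^ 2 * C (R := R) S - 190 * C (R := R) L * C (R := R) S ^ 2
                + 75 * C (R := R) S ^ 3) * X ^ 3) * (1 + C (R := R) c₁ * X) with hP
  have hE : 2 * (6 * C (R := R) L * X
            + (24 * C (R := R) L ^ 2 + 7 * C (R := R) L * C (R := R) S - 21 * C (R := R) S ^ 2) * X ^ 2
            + (120 * C (R := R) L ^ 2 * C (R := R) S - 190 * C (R := R) L * C (R := R) S ^ 2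
                + 75 * C (R := R) S ^ 3) * X ^ 3) * v * (1 + C (R := R) c₁ * X) = P * v := by
    rw [hP]; ring
  rw [hE]
  -- explicit polynomial forms
  have huE : u = 1 + monomial (R := R) 1 (10 * L - 7 * S)
      + monomial (R := R) 2 (24 * L ^ 2 - 28 * L * S + 7 * S ^ 2)
      + monomial (R := R) 3 (24 * L ^ 2 * S - 38 * L * S ^ 2 + 15 * S ^ 3) := by
    rw [hu, ← c_mul_X_pow, ← c_mul_X_pow, ← c_mul_X_pow]
    simp only [map_add, map_sub, map_mul, map_pow, map_ofNat]
    ring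
  have hPE : P = monomial (R := R) 1 (12 * L)
      + monomial (R := R) 2 (48 * L ^ 2 + 14 * L * S - 42 * S ^ 2 + 12 * L * c₁)
      + monomial (R := R) 3 (240 * L ^ 2 * S - 380 * L * S ^ 2 + 150 * S ^ 3
          + (48 * L ^ 2 + 14 * L * S - 42 * S ^ 2) * c₁)
      + monomial (R := R) 4 ((240 * L ^ 2 * S - 380 * L * S ^ 2 + 150 * S ^ 3) * c₁) := by
    rw [hP, ← c_mul_X_pow, ← c_mul_X_pow, ← c_mul_X_pow, ← c_mul_X_pow]
    simp only [map_add, map_sub, map_mul, map_pow, map_ofNat, pow_one]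
    ring
  have hu0 : coeff (R := R) 0 u = 1 := by
    rw [huE]; simp only [map_add, map_sub, coeff_monomial, coeff_zero_one, coeff_one]; norm_num
  have hu1 : coeff (R := R) 1 u = 10 * L - 7 * S := by
    rw [huE]; simp only [map_add, map_sub, coeff_monomial, coeff_zero_one, coeff_one]; norm_num
  have hu2 : coeff (R := R) 2 u = 24 * L ^ 2 - 28 * L * S + 7 * S ^ 2 := by
    rw [huE]; simp only [map_add, map_sub, coeff_monomial, coeff_zero_one, coeff_one]; norm_num
  have hp0 : coeff (R := R) 0 P = 0 := by
    rw [hPE]; simp only [map_add, map_sub, coeff_monomial, coeff_zero_one, coeff_one]; norm_num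
  have hp1 : coeff (R := R) 1 P = 12 * L := by
    rw [hPE]; simp only [map_add, map_sub, coeff_monomial, coeff_zero_one, coeff_one]; norm_num
  have hp2 : coeff (R := R) 2 P = 48 * L ^ 2 + 14 * L * S - 42 * S ^ 2 + 12 * L * c₁ := by
    rw [hPE]; simp only [map_add, map_sub, coeff_monomial, coeff_zero_one, coeff_one]; norm_num
  have hv0 : coeff (R := R) 0 v = 1 := by
    have := congrArg (coeff (R := R) 0) (Ring.inverse_mul_cancel u hunit)
    simpa [coeff_mul, hu0] using this
  have hPu : P * v * u = P := by
    rw [mul_assoc, hv, Ring.inverse_mul_cancel u hunit, mul_one]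
  have h2 := congrArg (coeff (R := R) 2) hPu
  simp only [coeff_mul, Finset.Nat.sum_antidiagonal_eq_sum_range_succ_mk,
    Finset.sum_range_succ, Finset.sum_range_zero, zero_add,
    hu0, hu1, hu2, hp0, hp1, hp2, hv0] at h2 ⊢
  linear_combination h2
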